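/- If K is a perfect Baire space, then CD_ω(K) is a closed sublattice of B(K) with respect to the uniform norm. -/

import Mathlib

/-- f is a bounded real function (member of B(K)). -/
def Bdd {K : Type*} (f : K → ℝ) : Prop := ∃ C : ℝ, ∀ x, |f x| ≤ C

/-- The space CD_ω(K). -/
def CDomega (K : Type*) [TopologicalSpace K] : Set (K → ℝ) :=
  {f | Bdd f ∧ ∃ g : K → ℝ, Continuous g ∧ Bdd g ∧ {x | f x ≠ g x}.Countable}

lemma dense_compl_of_countable {K : Type*} [TopologicalSpace K] [T2Space K] [BaireSpace K]
    (hperfect : ∀ x : K, ¬ IsOpen ({x} : Set K)) {S : Set K} (hS : S.Countable) :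
    Dense Sᶜ := by
  apply dense_of_mem_residual
  have : Sᶜ = ⋂ x ∈ S, ({x} : Set K)ᶜ := by
    ext y
    simp only [Set.mem_compl_iff, Set.mem_iInter, Set.mem_singleton_iff]
    exact ⟨fun h x hx hyx => h (hyx ▸ hx), fun h hy => h y hy rfl⟩
  rw [this]
  refine (countable_bInter_mem hS).2 fun x hx => ?_
  refine residual_of_dense_open isClosed_singleton.isOpen_compl ?_
  rw [dense_compl_singleton_iff_not_open]
  exact hperfect x

theorem stmt6 {K : Type*} [TopologicalSpace K] [T2Space K] [BaireSpace K]
    (hperfect : ∀ x : K, ¬ IsOpen ({x} : Set K)) :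
    -- sublattice of B(K)
    (CDomega K ⊆ {f | Bdd f}) ∧
    (∀ f ∈ CDomega K, ∀ g ∈ CDomega K, f + g ∈ CDomega K) ∧
    (∀ (c : ℝ), ∀ f ∈ CDomega K, c • f ∈ CDomega K) ∧
    (∀ f ∈ CDomega K, ∀ g ∈ CDomega K, f ⊔ g ∈ CDomega K) ∧
    -- closed under uniform limits in B(K)
    (∀ (u : ℕ → K → ℝ) (f : K → ℝ), (∀ n, u n ∈ CDomega K) → Bdd f →
      (∀ ε : ℝ, 0 < ε → ∃ N : ℕ, ∀ n ≥ N, ∀ x, |u n x - f x| ≤ ε) →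
      f ∈ CDomega K) := by
  refine ⟨fun f hf => hf.1, ?_, ?_, ?_, ?_⟩
  · rintro f ⟨⟨Cf, hCf⟩, f', hf'c, ⟨Cf', hCf'⟩, hf'⟩ g ⟨⟨Cg, hCg⟩, g', hg'c, ⟨Cg', hCg'⟩, hg'⟩
    refine ⟨⟨Cf + Cg, fun x => (abs_add_le _ _).trans (add_le_add (hCf x) (hCg x))⟩,
      f' + g', hf'c.add hg'c,
      ⟨Cf' + Cg', fun x => (abs_add_le _ _).trans (add_le_add (hCf' x) (hCg' x))⟩,
      (hf'.union hg').mono ?_⟩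
    intro x hx
    by_contra h
    simp only [Set.mem_union, Set.mem_setOf_eq, not_or, not_ne_iff] at h
    simp only [Set.mem_setOf_eq, Pi.add_apply, h.1, h.2, ne_eq, not_true_eq_false] at hx
  · rintro c f ⟨⟨Cf, hCf⟩, f', hf'c, ⟨Cf', hCf'⟩, hf'⟩
    refine ⟨⟨|c| * Cf, fun x => ?_⟩, c • f', hf'c.const_smul c,
      ⟨|c| * Cf', fun x => ?_⟩, hf'.mono ?_⟩
    · simp only [Pi.smul_apply, smul_eq_mul, abs_mul]
      exact mul_le_mul_of_nonneg_left (hCf x) (abs_nonneg c)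
    · simp only [Pi.smul_apply, smul_eq_mul, abs_mul]
      exact mul_le_mul_of_nonneg_left (hCf' x) (abs_nonneg c)
    · intro x hx
      simp only [Set.mem_setOf_eq, Pi.smul_apply, smul_eq_mul] at hx ⊢
      intro h; exact hx (by rw [h])
  · rintro f ⟨⟨Cf, hCf⟩, f', hf'c, ⟨Cf', hCf'⟩, hf'⟩ g ⟨⟨Cg, hCg⟩, g', hg'c, ⟨Cg', hCg'⟩, hg'⟩
    refine ⟨⟨|Cf| + |Cg|, fun x => ?_⟩, f' ⊔ g', hf'c.sup hg'c,
      ⟨|Cf'| + |Cg'|, fun x => ?_⟩, (hf'.union hg').mono ?_⟩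
    · have h1 := hCf x; have h2 := hCg x
      simp only [Pi.sup_apply]
      rw [abs_le] at h1 h2 ⊢
      constructor
      · calc -(|Cf| + |Cg|) ≤ -|Cf| := by nlinarith [abs_nonneg Cg]
          _ ≤ f x := by cases abs_cases Cf <;> linarith
          _ ≤ f x ⊔ g x := le_sup_left
      · exact sup_le (h1.2.trans ((le_abs_self Cf).trans (by nlinarith [abs_nonneg Cg])))
          (h2.2.trans ((le_abs_self Cg).trans (by nlinarith [abs_nonneg Cf])))
    · have h1 := hCf' x; have h2 := hCg' x
      simp only [Pi.sup_apply]
      rw [abs_le] at h1 h2 ⊢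
      constructor
      · calc -(|Cf'| + |Cg'|) ≤ -|Cf'| := by nlinarith [abs_nonneg Cg']
          _ ≤ f' x := by cases abs_cases Cf' <;> linarith
          _ ≤ f' x ⊔ g' x := le_sup_left
      · exact sup_le (h1.2.trans ((le_abs_self Cf').trans (by nlinarith [abs_nonneg Cg'])))
          (h2.2.trans ((le_abs_self Cg').trans (by nlinarith [abs_nonneg Cf'])))
    · intro x hx
      by_contra h
      simp only [Set.mem_union, Set.mem_setOf_eq, not_or, not_ne_iff] at h
      simp only [Set.mem_setOf_eq, Pi.sup_apply, h.1, h.2, ne_eq, not_true_eq_false] at hx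
  · intro u f hu hbf hconv
    -- choose continuous parts
    choose g hgc hgb hgcnt using fun n => (hu n).2
    set S : Set K := ⋃ n, {x | u n x ≠ g n x} with hSdef
    have hScnt : S.Countable := Set.countable_iUnion hgcnt
    have hD : Dense Sᶜ := dense_compl_of_countable hperfect hScnt
    have hDeq : ∀ n, ∀ x ∈ Sᶜ, u n x = g n x := by
      intro n x hx
      by_contra h
      exact hx (Set.mem_iUnion.2 ⟨n, h⟩)
    -- uniform Cauchy estimate for g
    have key : ∀ ε : ℝ, 0 < ε → ∃ N : ℕ, ∀ n ≥ N, ∀ m ≥ N, ∀ x, |g n x - g m x| ≤ ε := by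
      intro ε hε
      obtain ⟨N, hN⟩ := hconv (ε / 2) (by linarith)
      refine ⟨N, fun n hn m hm x => ?_⟩
      have hclosed : IsClosed {x | |g n x - g m x| ≤ ε} := by
        have : Continuous fun x => |g n x - g m x| := ((hgc n).sub (hgc m)).abs
        exact isClosed_le this continuous_const
      have hsub : Sᶜ ⊆ {x | |g n x - g m x| ≤ ε} := by
        intro y hy
        have h1 := hN n hn y
        have h2 := hN m hm y
        rw [hDeq n y hy] at h1
        rw [hDeq m y hy] at h2
        simp only [Set.mem_setOf_eq]
        calc |g n y - g m y| = |(g n y - f y) - (g m y - f y)| := by ring_nf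
          _ ≤ |g n y - f y| + |g m y - f y| := abs_sub _ _
          _ ≤ ε / 2 + ε / 2 := add_le_add h1 h2
          _ = ε := by ring
      have : (Set.univ : Set K) ⊆ {x | |g n x - g m x| ≤ ε} := by
        rw [← hclosed.closure_eq]
        calc (Set.univ : Set K) = closure Sᶜ := hD.closure_eq.symm
          _ ⊆ closure {x | |g n x - g m x| ≤ ε} := closure_mono hsub
      exact this (Set.mem_univ x)
    -- pointwise limit exists
    have hcauchy : ∀ x, CauchySeq fun n => g n x := by
      intro x
      rw [Metric.cauchySeq_iff]
      intro ε hε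
      obtain ⟨N, hN⟩ := key (ε / 2) (by linarith)
      refine ⟨N, fun n hn m hm => ?_⟩
      have := hN n hn m hm x
      rw [Real.dist_eq]
      linarith
    choose G hG using fun x => cauchySeq_tendsto_of_complete (hcauchy x)
    -- g n → G uniformly with explicit bound
    have hunif : ∀ ε : ℝ, 0 < ε → ∃ N, ∀ n ≥ N, ∀ x, |g n x - G x| ≤ ε := by
      intro ε hε
      obtain ⟨N, hN⟩ := key ε hε
      refine ⟨N, fun n hn x => ?_⟩
      have htend : Filter.Tendsto (fun m => |g n x - g m x|) Filter.atTop
          (nhds |g n x - G x|) :=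
        ((tendsto_const_nhds.sub (hG x)).abs)
      refine le_of_tendsto htend ?_
      filter_upwards [Filter.eventually_ge_atTop N] with m hm
      exact hN n hn m hm x
    have hGc : Continuous G := by
      have : TendstoUniformly g G Filter.atTop := by
        rw [Metric.tendstoUniformly_iff]
        intro ε hε
        obtain ⟨N, hN⟩ := hunif (ε / 2) (by linarith)
        filter_upwards [Filter.eventually_ge_atTop N] with n hn x
        rw [Real.dist_eq, abs_sub_comm]
        have := hN n hn x
        linarith
      exact this.continuous (Filter.Eventually.of_forall hgc).frequently
    have hGb : Bdd G := by
      obtain ⟨N, hN⟩ := hunif 1 one_pos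
      obtain ⟨C, hC⟩ := hgb N
      refine ⟨C + 1, fun x => ?_⟩
      have h1 := hN N le_rfl x
      have h2 := hC x
      calc |G x| = |g N x - (g N x - G x)| := by ring_nf
        _ ≤ |g N x| + |g N x - G x| := abs_sub _ _
        _ ≤ C + 1 := add_le_add h2 h1
    refine ⟨hbf, G, hGc, hGb, hScnt.mono ?_⟩
    intro x hx
    simp only [Set.mem_setOf_eq] at hx
    by_contra hxS
    -- x ∈ Sᶜ, so u n x = g n x for all n, u n x → f x, g n x → G x
    have hfx : Filter.Tendsto (fun n => u n x) Filter.atTop (nhds (f x)) := by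
      rw [Metric.tendsto_atTop]
      intro ε hε
      obtain ⟨N, hN⟩ := hconv (ε / 2) (by linarith)
      refine ⟨N, fun n hn => ?_⟩
      rw [Real.dist_eq]
      have := hN n hn x
      linarith
    have hGx : Filter.Tendsto (fun n => u n x) Filter.atTop (nhds (G x)) := by
      have heq : (fun n => u n x) = fun n => g n x := by
        funext n; exact hDeq n x hxS
      rw [heq]
      exact hG x
    exact hx (tendsto_nhds_unique hfx hGx)
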